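/- Let A ∈ ℝ^{m×n}, let u ∈ ℝ^n have nonnegative entries, let v ∈ ℝ^m have strictly positive entries with Σ_i v_i = 1, and let ξ > 0 and ρ > 0 satisfy max_{i∈[m]} Σ_{j∈[n]} |A_{ij}|·(u_j + ξ) ≤ 2ρ. Then for all a ∈ ℝ^n, b ∈ ℝ^m, and τ > 0: |Σ_{i,j} b_i·A_{ij}·a_j| ≤ √ρ·τ·Σ_{i=1}^m b_i²/v_i + (√ρ/τ)·Σ_{j=1}^n (Σ_{i=1}^m |A_{ij}|·v_i)·a_j²/(u_j + ξ). -/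

import Mathlib

private lemma key12 (x y α : ℝ) (hα : 0 < α) :
    x * y ≤ α / 2 * x ^ 2 + 1 / (2 * α) * y ^ 2 := by
  have h : 2 * α * (x * y) ≤ α ^ 2 * x ^ 2 + y ^ 2 := by nlinarith [sq_nonneg (α * x - y)]
  have h2 : x * y ≤ (α ^ 2 * x ^ 2 + y ^ 2) / (2 * α) := by
    rw [le_div_iff₀ (by positivity)]; linarith
  have h3 : (α ^ 2 * x ^ 2 + y ^ 2) / (2 * α) = α / 2 * x ^ 2 + 1 / (2 * α) * y ^ 2 := by
    field_simp
  linarith [h3 ▸ h2]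

theorem stmt12 (m n : ℕ) (A : Fin m → Fin n → ℝ) (u : Fin n → ℝ) (v : Fin m → ℝ)
    (hu : ∀ j, 0 ≤ u j) (hv : ∀ i, 0 < v i) (hv1 : ∑ i, v i = 1)
    (ξ ρ : ℝ) (hξ : 0 < ξ) (hρ : 0 < ρ)
    (hrow : ∀ i, ∑ j, |A i j| * (u j + ξ) ≤ 2 * ρ)
    (a : Fin n → ℝ) (b : Fin m → ℝ) (τ : ℝ) (hτ : 0 < τ) :
    |∑ i, ∑ j, b i * A i j * a j| ≤
      Real.sqrt ρ * τ * ∑ i, b i ^ 2 / v i +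
      (Real.sqrt ρ / τ) * ∑ j, (∑ i, |A i j| * v i) * a j ^ 2 / (u j + ξ) := by
  set s := Real.sqrt ρ with hsdef
  have hs : 0 < s := Real.sqrt_pos.mpr hρ
  have hs2 : s * s = ρ := Real.mul_self_sqrt hρ.le
  have huξ : ∀ j, 0 < u j + ξ := fun j => by linarith [hu j]
  have hT : ∀ i j, |b i * A i j * a j| ≤
      |A i j| * (u j + ξ) * (τ / (4 * s)) * (b i ^ 2 / v i)
      + |A i j| * v i * (s / τ) * (a j ^ 2 / (u j + ξ)) := by
    intro i j
    have h0 := huξ j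
    have h0' := hv i
    have hα : 0 < τ * (u j + ξ) / (2 * s * v i) := by positivity
    have hb := key12 (|b i|) (|a j|) _ hα
    have h1 : |b i * A i j * a j| = |A i j| * (|b i| * |a j|) := by
      rw [abs_mul, abs_mul]; ring
    have h2 : |A i j| * (|b i| * |a j|) ≤ |A i j| *
        (τ * (u j + ξ) / (2 * s * v i) / 2 * |b i| ^ 2
          + 1 / (2 * (τ * (u j + ξ) / (2 * s * v i))) * |a j| ^ 2) :=
      mul_le_mul_of_nonneg_left hb (abs_nonneg _)
    rw [h1]
    refine h2.trans (le_of_eq ?_)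
    rw [sq_abs, sq_abs]
    have hv' : (v i) ≠ 0 := (hv i).ne'
    have huξ' : (u j + ξ) ≠ 0 := (huξ j).ne'
    field_simp
    ring
  calc |∑ i, ∑ j, b i * A i j * a j|
      ≤ ∑ i, |∑ j, b i * A i j * a j| := Finset.abs_sum_le_sum_abs _ _
    _ ≤ ∑ i, ∑ j, |b i * A i j * a j| :=
        Finset.sum_le_sum fun i _ => Finset.abs_sum_le_sum_abs _ _
    _ ≤ ∑ i, ∑ j, (|A i j| * (u j + ξ) * (τ / (4 * s)) * (b i ^ 2 / v i)
          + |A i j| * v i * (s / τ) * (a j ^ 2 / (u j + ξ))) :=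
        Finset.sum_le_sum fun i _ => Finset.sum_le_sum fun j _ => hT i j
    _ = (∑ i, ∑ j, |A i j| * (u j + ξ) * (τ / (4 * s)) * (b i ^ 2 / v i))
          + ∑ i, ∑ j, |A i j| * v i * (s / τ) * (a j ^ 2 / (u j + ξ)) := by
        rw [← Finset.sum_add_distrib]
        exact Finset.sum_congr rfl fun i _ => Finset.sum_add_distrib
    _ ≤ s * τ * ∑ i, b i ^ 2 / v i
          + (s / τ) * ∑ j, (∑ i, |A i j| * v i) * a j ^ 2 / (u j + ξ) := by
        have hfirst : (∑ i, ∑ j, |A i j| * (u j + ξ) * (τ / (4 * s)) * (b i ^ 2 / v i))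
            ≤ s * τ * ∑ i, b i ^ 2 / v i := by
          have step : ∀ i : Fin m, ∑ j, |A i j| * (u j + ξ) * (τ / (4 * s)) * (b i ^ 2 / v i)
              ≤ s * τ * (b i ^ 2 / v i) := by
            intro i
            have h1 : ∑ j, |A i j| * (u j + ξ) * (τ / (4 * s)) * (b i ^ 2 / v i)
                = (∑ j, |A i j| * (u j + ξ)) * ((τ / (4 * s)) * (b i ^ 2 / v i)) := by
              rw [Finset.sum_mul]; exact Finset.sum_congr rfl fun j _ => by ring
            rw [h1]
            have h0' := hv i
            have hnn : 0 ≤ (τ / (4 * s)) * (b i ^ 2 / v i) := by positivity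
            have h2 := mul_le_mul_of_nonneg_right (hrow i) hnn
            refine h2.trans ?_
            have hc : 2 * ρ * (τ / (4 * s) * (b i ^ 2 / v i)) = s * τ / 2 * (b i ^ 2 / v i) := by
              rw [← hs2]; field_simp; ring
            rw [hc]
            have hb2 : 0 ≤ b i ^ 2 / v i := by positivity
            nlinarith [mul_nonneg (mul_nonneg hs.le hτ.le) hb2]
          calc (∑ i, ∑ j, |A i j| * (u j + ξ) * (τ / (4 * s)) * (b i ^ 2 / v i))
              ≤ ∑ i, s * τ * (b i ^ 2 / v i) := Finset.sum_le_sum fun i _ => step i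
            _ = s * τ * ∑ i, b i ^ 2 / v i := by rw [Finset.mul_sum]
        have hsecond : (∑ i, ∑ j, |A i j| * v i * (s / τ) * (a j ^ 2 / (u j + ξ)))
            = (s / τ) * ∑ j, (∑ i, |A i j| * v i) * a j ^ 2 / (u j + ξ) := by
          rw [Finset.sum_comm, Finset.mul_sum]
          refine Finset.sum_congr rfl fun j _ => ?_
          rw [Finset.sum_mul, Finset.sum_div, Finset.mul_sum]
          exact Finset.sum_congr rfl fun i _ => by ring
        rw [hsecond]
        exact add_le_add_left hfirst _
  done
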